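/- Let n ≥ 1 and let λ₁ ≤ λ₂ ≤ ⋯ ≤ λₙ be real numbers with λᵢ = −λ_{n+1−i} for all i, with −1 < λᵢ < 1 and λᵢ ≠ 0 for all i, and whose Newton polygon G takes integer values at every breakpoint. Then there exists d ∈ {−1, 0, 1}ⁿ with dᵢ = −d_{n+1−i} for all i, such that for every 1 ≤ i ≤ n − 1 the partial sum P(i) = d₁ + ⋯ + dᵢ satisfies P(i) ≤ G(i), with equality if and only if i is a breakpoint of (λ₁,…,λₙ). (In other words, there exists an antisymmetric lattice path from (0,0) to (n,0) with steps (1,−1), (1,0), (1,1) lying weakly below the symmetric Newton polygon and touching it precisely at the initial point, end point and breakpoints.) -/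

import Mathlib

/-- Let `n ≥ 1` and let `λ₁ ≤ ⋯ ≤ λₙ` be reals with
`λᵢ = −λ_{n+1−i}` for all `i`, with `−1 < λᵢ < 1` and `λᵢ ≠ 0` for all `i`, and
whose Newton polygon `G(i) = λ₁ + ⋯ + λᵢ` takes integer values at every
breakpoint (an index `1 ≤ i ≤ n−1` with `λᵢ ≠ λᵢ₊₁`).  Then there exists
`d ∈ {−1,0,1}ⁿ` with `dᵢ = −d_{n+1−i}` for all `i`, such that for every
`1 ≤ i ≤ n−1` the partial sum `P(i) = d₁ + ⋯ + dᵢ` satisfies `P(i) ≤ G(i)`,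
with equality iff `i` is a breakpoint of `(λ₁,…,λₙ)`. -/
theorem stmt8 (n : ℕ) (hn : 1 ≤ n) (lam : ℕ → ℝ)
    (hmono : ∀ i, 1 ≤ i → i < n → lam i ≤ lam (i + 1))
    (hsym : ∀ i, 1 ≤ i → i ≤ n → lam i = - lam (n + 1 - i))
    (hbound : ∀ i, 1 ≤ i → i ≤ n → -1 < lam i ∧ lam i < 1)
    (hne : ∀ i, 1 ≤ i → i ≤ n → lam i ≠ 0)
    (hint : ∀ i, 1 ≤ i → i ≤ n - 1 → lam i ≠ lam (i + 1) →
      ∃ m : ℤ, (∑ t ∈ Finset.Icc 1 i, lam t) = (m : ℝ)) :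
    ∃ d : ℕ → ℤ,
      (∀ i, 1 ≤ i → i ≤ n →
        (d i = -1 ∨ d i = 0 ∨ d i = 1) ∧ d i = - d (n + 1 - i)) ∧
      ∀ i, 1 ≤ i → i ≤ n - 1 →
        ((∑ t ∈ Finset.Icc 1 i, (d t : ℝ)) ≤ (∑ t ∈ Finset.Icc 1 i, lam t) ∧
         ((∑ t ∈ Finset.Icc 1 i, (d t : ℝ)) = (∑ t ∈ Finset.Icc 1 i, lam t) ↔
           lam i ≠ lam (i + 1))) := by
  classical
  set G : ℕ → ℝ := fun i => ∑ t ∈ Finset.Icc 1 i, lam t with hGdef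
  have hG0 : G 0 = 0 := by simp [hGdef]
  have hGIoc : ∀ i, G i = ∑ t ∈ Finset.Ioc 0 i, lam t := by
    intro i; rw [hGdef]; rw [← Finset.Icc_add_one_left_eq_Ioc]; rfl
  -- reindexing lemma
  have hre : ∀ j, j ≤ n →
      (∑ t ∈ Finset.Icc 1 j, lam (n + 1 - t)) = ∑ s ∈ Finset.Icc (n + 1 - j) n, lam s := by
    intro j hj
    refine Finset.sum_nbij' (fun t => n + 1 - t) (fun s => n + 1 - s) ?_ ?_ ?_ ?_ ?_ <;>
      intro a ha <;> simp only [Finset.mem_Icc] at ha ⊢ <;> omega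
  -- pointwise negation
  have hpt : ∀ j, j ≤ n → (∑ t ∈ Finset.Icc 1 j, lam (n + 1 - t)) = - G j := by
    intro j hj
    rw [hGdef]
    rw [← Finset.sum_neg_distrib]
    refine Finset.sum_congr rfl ?_
    intro t ht
    simp only [Finset.mem_Icc] at ht
    have := hsym t ht.1 (le_trans ht.2 hj)
    linarith
  have hGn : G n = 0 := by
    have h1 := hre n le_rfl
    have h2 := hpt n le_rfl
    rw [show n + 1 - n = 1 from by omega] at h1
    rw [h1] at h2
    have : G n = ∑ s ∈ Finset.Icc 1 n, lam s := by rw [hGdef]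
    rw [← this] at h2
    linarith
  have hGsym : ∀ j, j ≤ n → G (n - j) = G j := by
    intro j hj
    have hsplit : G (n - j) + ∑ t ∈ Finset.Ioc (n - j) n, lam t = G n := by
      rw [hGIoc, hGIoc]
      exact Finset.sum_Ioc_consecutive _ (Nat.zero_le _) (by omega)
    have hIoc : Finset.Ioc (n - j) n = Finset.Icc (n + 1 - j) n := by
      rw [← Finset.Icc_add_one_left_eq_Ioc]; congr 1; omega
    have h3 : (∑ t ∈ Finset.Ioc (n - j) n, lam t) = - G j := by
      rw [hIoc, ← hre j hj, hpt j hj]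
    rw [hGn, h3] at hsplit
    linarith
  set spec : ℕ → Prop :=
    fun i => i = 0 ∨ i = n ∨ (1 ≤ i ∧ i ≤ n - 1 ∧ lam i ≠ lam (i + 1)) with hspecdef
  have hGint : ∀ j, j ≤ n → spec j → ∃ m : ℤ, G j = (m : ℝ) := by
    intro j hj hs
    rcases hs with h0 | hN | ⟨h1, h2, h3⟩
    · exact ⟨0, by rw [h0, hG0]; simp⟩
    · exact ⟨0, by rw [hN, hGn]; simp⟩
    · exact hint j h1 h2 h3
  set P : ℕ → ℤ := fun i => if spec i then ⌈G i⌉ else ⌈G i⌉ - 1 with hPdef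
  have hPle : ∀ j, j ≤ n → (P j : ℝ) ≤ G j := by
    intro j hj
    by_cases hs : spec j
    · obtain ⟨m, hm⟩ := hGint j hj hs
      rw [hPdef]; simp only [if_pos hs, hm, Int.ceil_intCast]; exact le_rfl
    · rw [hPdef]; simp only [if_neg hs]
      push_cast
      have := Int.ceil_lt_add_one (G j)
      linarith
  have hPeq : ∀ j, j ≤ n → ((P j : ℝ) = G j ↔ spec j) := by
    intro j hj
    constructor
    · intro h
      by_contra hs
      rw [hPdef] at h; simp only [if_neg hs] at h
      push_cast at h
      have := Int.ceil_lt_add_one (G j)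
      linarith
    · intro hs
      obtain ⟨m, hm⟩ := hGint j hj hs
      rw [hPdef]; simp only [if_pos hs, hm, Int.ceil_intCast]
  have hPge : ∀ j, G j - 1 ≤ (P j : ℝ) := by
    intro j
    have := Int.le_ceil (G j)
    rw [hPdef]
    by_cases hs : spec j <;> simp only [if_pos, if_neg, hs] <;> push_cast <;> linarith
  have hP0 : P 0 = 0 := by
    rw [hPdef]
    have : spec 0 := Or.inl rfl
    simp only [if_pos this, hG0, Int.ceil_zero]
  -- symmetry of breakpoints
  have hbk : ∀ j, 1 ≤ j → j ≤ n - 1 → (lam j ≠ lam (j + 1) ↔ lam (n - j) ≠ lam (n - j + 1)) := by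
    intro j h1 h2
    have ha : lam (n - j) = - lam (j + 1) := by
      have h := hsym (j + 1) (by omega) (by omega)
      rw [show n + 1 - (j + 1) = n - j from by omega] at h
      linarith
    have hb : lam (n - j + 1) = - lam j := by
      have h := hsym j h1 (by omega)
      rw [show n + 1 - j = n - j + 1 from by omega] at h
      linarith
    constructor
    · intro h hc; exact h (by rw [ha, hb] at hc; linarith)
    · intro h hc; exact h (by rw [ha, hb, hc])
  have hspecsym : ∀ j, j ≤ n → (spec j → spec (n - j)) := by
    intro j hj hs
    rcases hs with h0 | hN | ⟨h1, h2, h3⟩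
    · exact Or.inr (Or.inl (by omega))
    · exact Or.inl (by omega)
    · exact Or.inr (Or.inr ⟨by omega, by omega, (hbk j h1 h2).mp h3⟩)
  have hPsym : ∀ j, j ≤ n → P j = P (n - j) := by
    intro j hj
    have hgs := hGsym j hj
    rw [hPdef]
    simp only
    rw [hgs]
    by_cases hs : spec j
    · rw [if_pos hs, if_pos (hspecsym j hj hs)]
    · rw [if_neg hs, if_neg (fun hc => hs (by
        have := hspecsym (n - j) (by omega) hc
        rwa [show n - (n - j) = j from by omega] at this))]
  -- step between consecutive G values
  have hGstep : ∀ i, 1 ≤ i → G i = G (i - 1) + lam i := by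
    intro i hi
    obtain ⟨k, rfl⟩ : ∃ k, i = k + 1 := ⟨i - 1, by omega⟩
    rw [hGIoc, hGIoc]
    simp only [Nat.add_sub_cancel]
    rw [← Finset.sum_Ioc_consecutive _ (Nat.zero_le k) (by omega : k ≤ k + 1)]
    congr 1
    rw [show Finset.Ioc k (k + 1) = {k + 1} from by
      ext x; simp only [Finset.mem_Ioc, Finset.mem_singleton]; omega]
    simp
  -- telescoping
  have htel : ∀ i, (∑ t ∈ Finset.Icc 1 i, (P t - P (t - 1))) = P i := by
    intro i
    induction i with
    | zero => simp [hP0]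
    | succ k ih =>
      rw [Finset.sum_Icc_succ_top (by omega : 1 ≤ k + 1), ih]
      simp
  refine ⟨fun i => P i - P (i - 1), ?_, ?_⟩
  · intro i h1 h2
    constructor
    · show P i - P (i - 1) = -1 ∨ P i - P (i - 1) = 0 ∨ P i - P (i - 1) = 1
      have e1 : (P i : ℝ) ≤ G i := hPle i h2
      have e2 : G (i - 1) - 1 ≤ (P (i - 1) : ℝ) := hPge (i - 1)
      have e3 : (P (i - 1) : ℝ) ≤ G (i - 1) := hPle (i - 1) (by omega)
      have e4 : G i - 1 ≤ (P i : ℝ) := hPge i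
      have estep : G i = G (i - 1) + lam i := hGstep i h1
      have hb := hbound i h1 h2
      have h5 : ((P i - P (i - 1) : ℤ) : ℝ) < 2 := by push_cast; linarith
      have h6 : (-2 : ℝ) < ((P i - P (i - 1) : ℤ) : ℝ) := by push_cast; linarith
      have h5' : (P i - P (i - 1) : ℤ) < 2 := by exact_mod_cast h5
      have h6' : (-2 : ℤ) < (P i - P (i - 1) : ℤ) := by exact_mod_cast h6
      omega
    · show P i - P (i - 1) = -(P (n + 1 - i) - P (n + 1 - i - 1))
      have k1 : P (n + 1 - i) = P (i - 1) := by
        have h := hPsym (i - 1) (by omega)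
        rw [show n - (i - 1) = n + 1 - i from by omega] at h
        exact h.symm
      have k2 : P (n - i) = P i := (hPsym i h2).symm
      rw [show n + 1 - i - 1 = n - i from by omega, k1, k2]
      ring
  · intro i h1 h2
    have hin : i ≤ n := by omega
    have hsumP : (∑ t ∈ Finset.Icc 1 i, ((P t - P (t - 1) : ℤ) : ℝ)) = (P i : ℝ) := by
      rw [← Int.cast_sum, htel i]
    have hGi : (∑ t ∈ Finset.Icc 1 i, lam t) = G i := by rw [hGdef]
    rw [hsumP, hGi]
    refine ⟨hPle i hin, ?_⟩
    rw [hPeq i hin]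
    constructor
    · intro hs
      rcases hs with h0 | hN | ⟨_, _, h3⟩
      · omega
      · omega
      · exact h3
    · intro h3
      exact Or.inr (Or.inr ⟨h1, h2, h3⟩)
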